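/- Let C be a precovering graph for a Petri net N = (P, T, Pre, Post) with distinguished vector m and initial vector m^init, and suppose s ∈ L(C) ∩ L(N, m^init) is a covering sequence for C. Then for every v ∈ L(C) there exists u ∈ T* such that uv is a covering sequence for C. -/

import Mathlib

/-- The effect `Δ(t) = Post(t) − Pre(t)` of a transition at a place. -/
def PetriDelta {P T : Type*} (Pre Post : T → P → ℕ) (t : T) (p : P) : ℤ :=
  (Post t p : ℤ) - (Pre t p : ℤ)

/-- The effect `Δ(w)` of a transition sequence at a place. -/
def PetriDeltaW {P T : Type*} (Pre Post : T → P → ℕ) (w : List T) (p : P) : ℤ :=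
  (w.map fun t => PetriDelta Pre Post t p).sum

/-- Firing a transition in an extended (`ℕ ∪ {ω}`-valued) marking, with
`ω − k = ω = ω + k`. -/
def PetriFire {P T : Type*} (Pre Post : T → P → ℕ) (t : T) (M : P → ℕ∞) :
    P → ℕ∞ :=
  fun p => M p - (Pre t p : ℕ∞) + (Post t p : ℕ∞)

/-- `PetriFireable Pre Post M w` : the transition sequence `w` is fireable from the
extended marking `M`; thus `L(N, M) = {w | PetriFireable Pre Post M w}`. -/
def PetriFireable {P T : Type*} (Pre Post : T → P → ℕ) :
    (P → ℕ∞) → List T → Prop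
  | _, [] => True
  | M, t :: ts => (∀ p, (Pre t p : ℕ∞) ≤ M p) ∧
      PetriFireable Pre Post (PetriFire Pre Post t M) ts

/-- `u ≤_ω v` : for every place `p`, `u p = v p` or `v p = ω`. -/
def leOmega {P : Type*} (u v : P → ℕ∞) : Prop := ∀ p, u p = v p ∨ v p = ⊤

/-- A precovering graph for the Petri net `(P, T, Pre, Post)`: a finite strongly
connected directed graph with vertices in `(ℕ ∪ {ω})^P`, edges labeled by
transitions, a distinguished vertex `m` and an initial vector `minit ≤_ω m`, such
that for every edge `(m1, m2)` labeled `t`, `t` is fireable in `m1` and the result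
of firing it is `≤_ω m2`. -/
structure Precover (P T : Type*) (Pre Post : T → P → ℕ) where
  V : Set (P → ℕ∞)
  finV : V.Finite
  E : Set ((P → ℕ∞) × (P → ℕ∞))
  lab : (P → ℕ∞) × (P → ℕ∞) → T
  m : P → ℕ∞
  minit : P → ℕ∞
  edges_mem : ∀ e ∈ E, e.1 ∈ V ∧ e.2 ∈ V
  m_mem : m ∈ V
  strongly_connected : ∀ u ∈ V, ∀ v ∈ V,
    Relation.ReflTransGen (fun a b => (a, b) ∈ E) u v
  edge_fire : ∀ e ∈ E, (∀ p, (Pre (lab e) p : ℕ∞) ≤ e.1 p) ∧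
    leOmega (PetriFire Pre Post (lab e) e.1) e.2
  init_le : leOmega minit m

/-- `PrecoverReads E lab u w v` : the word `w ∈ T*` is read along a path from `u`
to `v` in the labeled graph `(E, lab)`. -/
def PrecoverReads {P T : Type*} (E : Set ((P → ℕ∞) × (P → ℕ∞)))
    (lab : (P → ℕ∞) × (P → ℕ∞) → T) :
    (P → ℕ∞) → List T → (P → ℕ∞) → Prop
  | u, [], v => u = v
  | u, t :: w, v => ∃ z, (u, z) ∈ E ∧ lab (u, z) = t ∧ PrecoverReads E lab z w v

/-- `L(C)`: the words read along closed paths from `m` back to `m`. -/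
def Precover.lang {P T : Type*} {Pre Post : T → P → ℕ}
    (C : Precover P T Pre Post) : Set (List T) :=
  {w | PrecoverReads C.E C.lab C.m w C.m}

/-- `u` is a covering sequence for `C`: `u ∈ L(C) ∩ L(N, m^init)` and for every
place `p`, either `m^init[p] = ω`, or `m[p] = m^init[p]` and `Δ(u)[p] = 0`, or
`m[p] = ω` and `Δ(u)[p] > 0`. -/
def IsCoveringSeq {P T : Type*} (Pre Post : T → P → ℕ)
    (C : Precover P T Pre Post) (u : List T) : Prop :=
  u ∈ C.lang ∧ PetriFireable Pre Post C.minit u ∧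
  ∀ p : P, C.minit p = ⊤ ∨
    (C.m p = C.minit p ∧ PetriDeltaW Pre Post u p = 0) ∨
    (C.m p = ⊤ ∧ 0 < PetriDeltaW Pre Post u p)

namespace PetriAux

variable {P T : Type*} (Pre Post : T → P → ℕ)

def fireW (w : List T) (M : P → ℕ∞) : P → ℕ∞ :=
  w.foldl (fun M t => PetriFire Pre Post t M) M

@[simp] lemma fireW_nil (M : P → ℕ∞) : fireW Pre Post [] M = M := rfl

@[simp] lemma fireW_cons (t : T) (w : List T) (M : P → ℕ∞) :
    fireW Pre Post (t :: w) M = fireW Pre Post w (PetriFire Pre Post t M) := rfl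

lemma fireW_append (w1 w2 : List T) (M : P → ℕ∞) :
    fireW Pre Post (w1 ++ w2) M = fireW Pre Post w2 (fireW Pre Post w1 M) :=
  List.foldl_append ..

@[simp] lemma deltaW_nil (p : P) : PetriDeltaW Pre Post [] p = 0 := rfl

@[simp] lemma deltaW_cons (t : T) (w : List T) (p : P) :
    PetriDeltaW Pre Post (t :: w) p
      = PetriDelta Pre Post t p + PetriDeltaW Pre Post w p := by
  simp [PetriDeltaW]

lemma deltaW_append (w1 w2 : List T) (p : P) :
    PetriDeltaW Pre Post (w1 ++ w2) p
      = PetriDeltaW Pre Post w1 p + PetriDeltaW Pre Post w2 p := by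
  simp [PetriDeltaW]

@[simp] lemma fireable_nil (M : P → ℕ∞) : PetriFireable Pre Post M [] := trivial

lemma fireable_cons {M : P → ℕ∞} {t : T} {w : List T} :
    PetriFireable Pre Post M (t :: w) ↔
      (∀ p, (Pre t p : ℕ∞) ≤ M p) ∧
        PetriFireable Pre Post (PetriFire Pre Post t M) w := Iff.rfl

lemma fireable_append {M : P → ℕ∞} {w1 w2 : List T} :
    PetriFireable Pre Post M (w1 ++ w2) ↔
      PetriFireable Pre Post M w1 ∧
        PetriFireable Pre Post (fireW Pre Post w1 M) w2 := by
  induction w1 generalizing M with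
  | nil => simp
  | cons t ts ih => simp [fireable_cons, ih, and_assoc]

lemma fire_top {t : T} {M : P → ℕ∞} {p : P} (h : M p = ⊤) :
    PetriFire Pre Post t M p = ⊤ := by
  simp [PetriFire, h]

lemma fireW_top {w : List T} {M : P → ℕ∞} {p : P} (h : M p = ⊤) :
    fireW Pre Post w M p = ⊤ := by
  induction w generalizing M with
  | nil => exact h
  | cons t ts ih => exact ih (fire_top Pre Post h)

lemma fire_coe {t : T} {M : P → ℕ∞} {p : P} {n : ℕ} (h : M p = (n : ℕ∞)) :
    PetriFire Pre Post t M p = ((n - Pre t p + Post t p : ℕ) : ℕ∞) := by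
  simp [PetriFire, h]

/-- Value of firing a fireable word from a finite place. -/
lemma fireW_coe {w : List T} {M : P → ℕ∞} (hw : PetriFireable Pre Post M w)
    {p : P} {n : ℕ} (h : M p = (n : ℕ∞)) :
    ∃ k : ℕ, fireW Pre Post w M p = (k : ℕ∞) ∧
      (k : ℤ) = (n : ℤ) + PetriDeltaW Pre Post w p := by
  induction w generalizing M n with
  | nil => exact ⟨n, h, by simp⟩
  | cons t ts ih =>
    obtain ⟨h1, h2⟩ := hw
    have hpre : Pre t p ≤ n := by
      have := h1 p; rw [h] at this; exact_mod_cast this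
    obtain ⟨k, hk, hk2⟩ := ih h2 (fire_coe Pre Post h)
    refine ⟨k, hk, ?_⟩
    rw [hk2]
    rw [deltaW_cons]
    push_cast [Nat.cast_sub hpre]
    simp [PetriDelta]
    ring


lemma fire_mono {t : T} {M M' : P → ℕ∞} (h : ∀ p, M p ≤ M' p) :
    ∀ p, PetriFire Pre Post t M p ≤ PetriFire Pre Post t M' p := by
  intro p
  exact add_le_add_left (tsub_le_tsub_right (h p) _) _

lemma fireW_mono {w : List T} {M M' : P → ℕ∞} (h : ∀ p, M p ≤ M' p) :
    ∀ p, fireW Pre Post w M p ≤ fireW Pre Post w M' p := by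
  induction w generalizing M M' with
  | nil => exact h
  | cons t ts ih => exact ih (fire_mono Pre Post h)

lemma fireable_mono {w : List T} {M M' : P → ℕ∞} (h : ∀ p, M p ≤ M' p)
    (hw : PetriFireable Pre Post M w) : PetriFireable Pre Post M' w := by
  induction w generalizing M M' with
  | nil => trivial
  | cons t ts ih =>
    obtain ⟨h1, h2⟩ := hw
    exact ⟨fun p => (h1 p).trans (h p), ih (fire_mono Pre Post h) h2⟩

end PetriAux
namespace PetriAux

variable {P T : Type*} {Pre Post : T → P → ℕ} (C : Precover P T Pre Post)

lemma reads_append {a b c : P → ℕ∞} {w1 w2 : List T}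
    {E : Set ((P → ℕ∞) × (P → ℕ∞))} {lab : (P → ℕ∞) × (P → ℕ∞) → T}
    (h1 : PrecoverReads E lab a w1 b) (h2 : PrecoverReads E lab b w2 c) :
    PrecoverReads E lab a (w1 ++ w2) c := by
  induction w1 generalizing a with
  | nil => rwa [show a = b from h1]
  | cons t ts ih =>
    obtain ⟨z, hz, hl, hr⟩ := h1
    exact ⟨z, hz, hl, ih hr⟩

/-- ω-places are monotone along paths. -/
lemma reads_top {z y : P → ℕ∞} {w : List T}
    (h : PrecoverReads C.E C.lab z w y) {p : P} (hz : z p = ⊤) : y p = ⊤ := by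
  induction w generalizing z with
  | nil => rw [← show z = y from h]; exact hz
  | cons t ts ih =>
    obtain ⟨z', hz', _, hr⟩ := h
    refine ih hr ?_
    rcases (C.edge_fire _ hz').2 p with h3 | h3
    · change PetriFire Pre Post (C.lab (z, z')) z p = z' p at h3
      rw [← h3]; exact fire_top Pre Post hz
    · exact h3

/-- Exact value bookkeeping along a path ending at a finite place of the endpoint. -/
lemma reads_val {z y : P → ℕ∞} {w : List T}
    (h : PrecoverReads C.E C.lab z w y) {p : P} (hy : y p ≠ ⊤) :
    ∃ a b : ℕ, z p = (a : ℕ∞) ∧ y p = (b : ℕ∞) ∧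
      (b : ℤ) = (a : ℤ) + PetriDeltaW Pre Post w p := by
  induction w generalizing z with
  | nil =>
    subst h
    lift z p to ℕ using hy with a ha
    exact ⟨a, a, rfl, rfl, by simp⟩
  | cons t ts ih =>
    obtain ⟨z', hz', hlab, hr⟩ := h
    obtain ⟨a', b, ha', hb, hab⟩ := ih hr
    have hz'ne : z' p ≠ ⊤ := by rw [ha']; exact ENat.coe_ne_top a'
    -- z p is finite
    have hzne : z p ≠ ⊤ := by
      intro htop
      apply hz'ne
      rcases (C.edge_fire _ hz').2 p with h3 | h3
      · change PetriFire Pre Post (C.lab (z, z')) z p = z' p at h3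
        rw [← h3]; exact fire_top Pre Post htop
      · exact h3
    lift z p to ℕ using hzne with a ha
    have hpre : Pre t p ≤ a := by
      have h4 := (C.edge_fire _ hz').1 p
      change (Pre (C.lab (z, z')) p : ℕ∞) ≤ z p at h4
      rw [hlab, ← ha] at h4
      exact_mod_cast h4
    have hfz : PetriFire Pre Post t z p = ((a - Pre t p + Post t p : ℕ) : ℕ∞) :=
      fire_coe Pre Post ha.symm
    have hz'v : z' p = ((a - Pre t p + Post t p : ℕ) : ℕ∞) := by
      rcases (C.edge_fire _ hz').2 p with h3 | h3
      · change PetriFire Pre Post (C.lab (z, z')) z p = z' p at h3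
        rw [hlab] at h3
        rw [← h3]; exact hfz
      · exact absurd h3 hz'ne
    have ha'' : (a' : ℤ) = (a : ℤ) + PetriDelta Pre Post t p := by
      have h5 : a' = a - Pre t p + Post t p := by
        exact_mod_cast ha'.symm.trans hz'v
      rw [h5]
      push_cast [Nat.cast_sub hpre]
      simp [PetriDelta]; ring
    exact ⟨a, b, rfl, hb, by rw [hab, ha'', deltaW_cons]; ring⟩

/-- Closed paths at `m` have zero effect on finite places of `m`. -/
lemma lang_delta_zero {v : List T} (hv : v ∈ C.lang) {p : P} (hm : C.m p ≠ ⊤) :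
    PetriDeltaW Pre Post v p = 0 := by
  obtain ⟨a, b, ha, hb, hab⟩ := reads_val C hv hm
  have : a = b := by exact_mod_cast ha.symm.trans hb
  subst this
  omega

end PetriAux
namespace PetriAux

variable {P T : Type*} {Pre Post : T → P → ℕ} (C : Precover P T Pre Post)

/-- Lower bound on word effects: each step loses at most `B` tokens. -/
lemma deltaW_lower {B : ℕ} (hB : ∀ t p, Pre t p ≤ B) (w : List T) (p : P) :
    -(B * w.length : ℤ) ≤ PetriDeltaW Pre Post w p := by
  induction w with
  | nil => simp
  | cons t ts ih =>
    rw [deltaW_cons]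
    have h1 : -(B : ℤ) ≤ PetriDelta Pre Post t p := by
      have := hB t p
      simp only [PetriDelta]
      have : (Pre t p : ℤ) ≤ B := by exact_mod_cast this
      omega
    have h2 : (B * (t :: ts).length : ℤ) = B * ts.length + B := by
      simp [List.length_cons]; ring
    omega

/-- Main fireability lemma: a word read along a path to `m` is fireable from any
marking that agrees with the start vertex on finite places of `m` and is large
enough on the ω-places of `m`. -/
lemma reads_fireable {B : ℕ} (hB : ∀ t p, Pre t p ≤ B) :
    ∀ (w : List T) (z N : P → ℕ∞),
      PrecoverReads C.E C.lab z w C.m →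
      (∀ p, C.m p ≠ ⊤ → N p = z p) →
      (∀ p, C.m p = ⊤ → ((B * w.length : ℕ) : ℕ∞) ≤ N p) →
      PetriFireable Pre Post N w := by
  intro w
  induction w with
  | nil => intro _ _ _ _ _; trivial
  | cons t ts ih =>
    intro z N hread hfin htop
    obtain ⟨z', hz', hlab, hr⟩ := hread
    have hedge := C.edge_fire _ hz'
    have hedge1 : ∀ p, (Pre t p : ℕ∞) ≤ z p := by
      intro p
      have h4 := hedge.1 p
      change (Pre (C.lab (z, z')) p : ℕ∞) ≤ z p at h4
      rwa [hlab] at h4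
    have hedge2 : ∀ p, PetriFire Pre Post t z p = z' p ∨ z' p = ⊤ := by
      intro p
      have h4 := hedge.2 p
      change PetriFire Pre Post (C.lab (z, z')) z p = z' p ∨ z' p = ⊤ at h4
      rwa [hlab] at h4
    have hpreN : ∀ p, (Pre t p : ℕ∞) ≤ N p := by
      intro p
      by_cases hm : C.m p = ⊤
      · refine le_trans ?_ (htop p hm)
        have : Pre t p ≤ B * (t :: ts).length := by
          have := hB t p
          have hlen : 1 ≤ (t :: ts).length := by simp
          calc Pre t p ≤ B := this
            _ ≤ B * (t :: ts).length := Nat.le_mul_of_pos_right B (by omega)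
        exact_mod_cast this
      · rw [hfin p hm]; exact hedge1 p
    refine ⟨hpreN, ?_⟩
    refine ih z' (PetriFire Pre Post t N) hr ?_ ?_
    · -- finite places: exact agreement continues
      intro p hm
      have hz'fin : z' p ≠ ⊤ := fun h => hm (reads_top C hr h)
      have h5 : PetriFire Pre Post t z p = z' p := by
        rcases hedge2 p with h | h
        · exact h
        · exact absurd h hz'fin
      rw [← h5]
      simp only [PetriFire, hfin p hm]
    · -- ω-places: stay large
      intro p hm
      have hN := htop p hm
      have hlen : (B * (t :: ts).length : ℕ) = B * ts.length + B := by
        simp [List.length_cons]; ring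
      have h6 : ((B * ts.length : ℕ) : ℕ∞) + (Pre t p : ℕ∞) ≤ N p := by
        refine le_trans ?_ hN
        rw [hlen]
        push_cast
        exact add_le_add_right (by exact_mod_cast hB t p) _
      have h7 : ((B * ts.length : ℕ) : ℕ∞) ≤ N p - (Pre t p : ℕ∞) :=
        ENat.le_sub_of_add_le_left (ENat.coe_ne_top _) (by rwa [add_comm])
      exact le_trans h7 le_self_add

lemma reads_join {k : ℕ} {s : List T} (hs : s ∈ C.lang) :
    PrecoverReads C.E C.lab C.m ((List.replicate k s).flatten) C.m := by
  induction k with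
  | zero => rfl
  | succ n ih =>
    rw [List.replicate_succ, List.flatten_cons]
    exact reads_append hs ih

lemma deltaW_join {k : ℕ} {s : List T} (p : P) :
    PetriDeltaW Pre Post ((List.replicate k s).flatten) p
      = k * PetriDeltaW Pre Post s p := by
  induction k with
  | zero => simp [PetriDeltaW]
  | succ n ih =>
    rw [List.replicate_succ, List.flatten_cons, deltaW_append, ih]
    push_cast
    ring

end PetriAux
open PetriAux

/-- If a precovering graph `C` admits a covering sequence `s`, then
for every `v ∈ L(C)` there is `u ∈ T*` such that `u ++ v` is a covering sequence
for `C`. -/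
theorem covering_sequence_with_suffix {P T : Type*} [Fintype P] [Fintype T]
    (Pre Post : T → P → ℕ) (C : Precover P T Pre Post) (s : List T)
    (hs : IsCoveringSeq Pre Post C s) :
    ∀ v ∈ C.lang, ∃ u : List T, IsCoveringSeq Pre Post C (u ++ v) := by
  classical
  obtain ⟨hslang, hsfire, hscov⟩ := hs
  intro v hv
  -- a uniform bound on Pre
  obtain ⟨B, hB⟩ : ∃ B : ℕ, ∀ t p, Pre t p ≤ B := by
    refine ⟨Finset.univ.sup (fun t : T => Finset.univ.sup fun p : P => Pre t p), ?_⟩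
    intro t p
    refine le_trans ?_ (Finset.le_sup
      (f := fun t : T => Finset.univ.sup fun p : P => Pre t p) (Finset.mem_univ t))
    exact Finset.le_sup (Finset.mem_univ p)
  obtain ⟨k, hkval⟩ : ∃ k : ℕ, (k : ℤ) = (B : ℤ) * v.length + 1 :=
    ⟨B * v.length + 1, by push_cast; ring⟩
  set u : List T := (List.replicate k s).flatten with hu
  -- Δ(s) is nonnegative at finite places of minit
  have hΔs : ∀ p, C.minit p ≠ ⊤ → 0 ≤ PetriDeltaW Pre Post s p := by
    intro p hp
    rcases hscov p with h | ⟨_, h⟩ | ⟨_, h⟩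
    · exact absurd h hp
    · omega
    · omega
  -- one round of s does not decrease the marking
  have hstep : ∀ p, C.minit p ≤ fireW Pre Post s C.minit p := by
    intro p
    by_cases hp : C.minit p = ⊤
    · rw [fireW_top Pre Post hp]; exact le_top
    · lift C.minit p to ℕ using hp with n hn
      obtain ⟨k', hk', hk2⟩ := fireW_coe Pre Post hsfire hn.symm
      rw [hk']
      have : n ≤ k' := by
        have := hΔs p (by rw [← hn]; exact ENat.coe_ne_top n)
        omega
      exact_mod_cast this
  -- powers of s are fireable and nondecreasing
  have hpow : ∀ j : ℕ,
      PetriFireable Pre Post C.minit ((List.replicate j s).flatten) ∧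
      ∀ p, C.minit p ≤ fireW Pre Post ((List.replicate j s).flatten) C.minit p := by
    intro j
    induction j with
    | zero => exact ⟨trivial, fun p => le_refl _⟩
    | succ n ih =>
      rw [List.replicate_succ, List.flatten_cons]
      constructor
      · refine (fireable_append Pre Post).mpr ⟨hsfire, ?_⟩
        exact fireable_mono Pre Post hstep ih.1
      · intro p
        rw [fireW_append]
        calc C.minit p ≤ fireW Pre Post ((List.replicate n s).flatten) C.minit p :=
              ih.2 p
          _ ≤ _ := fireW_mono Pre Post hstep p
  have hufire : PetriFireable Pre Post C.minit u := (hpow k).1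
  set M : P → ℕ∞ := fireW Pre Post u C.minit with hM
  have hdu : ∀ p, PetriDeltaW Pre Post u p = k * PetriDeltaW Pre Post s p :=
    fun p => deltaW_join p
  -- M agrees with m on finite places of m
  have hMfin : ∀ p, C.m p ≠ ⊤ → M p = C.m p := by
    intro p hp
    rcases hscov p with h | ⟨h1, h2⟩ | ⟨h1, _⟩
    · -- minit p = ⊤ forces m p = ⊤
      exfalso
      rcases C.init_le p with h3 | h3
      · rw [h3] at h; exact hp h
      · exact hp h3
    · have hminit : C.minit p ≠ ⊤ := fun h => hp (h1.trans h)
      lift C.minit p to ℕ using hminit with n hn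
      obtain ⟨k', hk', hk2⟩ := fireW_coe Pre Post hufire hn.symm
      have : (k' : ℤ) = n := by rw [hk2, hdu p, h2]; ring
      have hkn : k' = n := by exact_mod_cast this
      show fireW Pre Post u C.minit p = C.m p
      rw [hk', hkn]; exact h1.symm
    · exact absurd h1 hp
  -- M is large at ω-places of m
  have hMtop : ∀ p, C.m p = ⊤ → ((B * v.length : ℕ) : ℕ∞) ≤ M p := by
    intro p hp
    by_cases hminit : C.minit p = ⊤
    · rw [hM, fireW_top Pre Post hminit]; exact le_top
    · lift C.minit p to ℕ using hminit with n hn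
      obtain ⟨k', hk', hk2⟩ := fireW_coe Pre Post hufire hn.symm
      rcases hscov p with h | ⟨h1, _⟩ | ⟨_, h2⟩
      · exact absurd h (by rw [← hn]; exact ENat.coe_ne_top n)
      · exfalso
        have h3 : C.minit p = ⊤ := by rw [← h1, hp]
        exact ENat.coe_ne_top n (hn.trans h3)
      · have hΔ1 : (1 : ℤ) ≤ PetriDeltaW Pre Post s p := h2
        have hkk : ((B : ℤ) * v.length) < (k' : ℤ) := by
          rw [hk2, hdu p]
          have : (k : ℤ) * 1 ≤ (k : ℤ) * PetriDeltaW Pre Post s p :=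
            mul_le_mul_of_nonneg_left hΔ1 (by positivity)
          omega
        have hble : B * v.length ≤ k' := by exact_mod_cast hkk.le
        show ((B * v.length : ℕ) : ℕ∞) ≤ fireW Pre Post u C.minit p
        rw [hk']
        exact_mod_cast hble
  refine ⟨u, ?_, ?_, ?_⟩
  · -- language membership
    exact reads_append (reads_join C hslang) hv
  · -- fireability
    refine (fireable_append Pre Post).mpr ⟨hufire, ?_⟩
    exact reads_fireable C hB v C.m M hv hMfin hMtop
  · -- covering condition
    intro p
    by_cases hminit : C.minit p = ⊤
    · exact Or.inl hminit
    · rcases hscov p with h | ⟨h1, h2⟩ | ⟨h1, h2⟩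
      · exact absurd h hminit
      · refine Or.inr (Or.inl ⟨h1, ?_⟩)
        have hmfin : C.m p ≠ ⊤ := by rw [h1]; exact hminit
        rw [deltaW_append, hdu p, h2, lang_delta_zero C hv hmfin]
        ring
      · refine Or.inr (Or.inr ⟨h1, ?_⟩)
        rw [deltaW_append, hdu p]
        have hlow := deltaW_lower (Post := Post) hB v p
        have hΔ1 : (1 : ℤ) ≤ PetriDeltaW Pre Post s p := h2
        have : (k : ℤ) * 1 ≤ (k : ℤ) * PetriDeltaW Pre Post s p :=
          mul_le_mul_of_nonneg_left hΔ1 (by positivity)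
        omega
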